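/- Let E be a real Banach space, A the generator of a uniformly bounded strongly continuous semigroup S with bound M, and for λ > 0 let A_λ = A(Id − A/λ)^(−1) = λ² R_λ(A) − λ·Id be the Yosida approximation, where R_λ(A) = (λ·Id − A)^(−1). Then the uniformly continuous semigroup S^λ generated by A_λ satisfies ‖S^λ_t‖ ≤ M for all t ≥ 0 and λ > 0. -/

import Mathlib

set_option synthInstance.maxHeartbeats 1000000
set_option maxHeartbeats 1000000


/-- Yosida approximation bound: if `R = R_λ(A)` satisfies the resolvent estimates
`‖R^k‖ ≤ M/λ^k`, then the uniformly continuous semigroup `S^λ_t = e^{−λt} e^{tλ² R}`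
generated by the Yosida approximation `A_λ = λ² R − λ·Id` satisfies `‖S^λ_t‖ ≤ M`
for all `t ≥ 0`. -/
theorem yosida_semigroup_bound {E : Type*} [NormedAddCommGroup E]
    [NormedSpace ℝ E] [CompleteSpace E]
    (M l : ℝ) (hl : 0 < l) (R : E →L[ℝ] E)
    (hR : ∀ k : ℕ, ‖(R ^ k : E →L[ℝ] E)‖ ≤ M / l ^ k) :
    ∀ t : ℝ, 0 ≤ t →
      ‖Real.exp (-(l * t)) • NormedSpace.exp ((t * l ^ 2) • R)‖ ≤ M := by
  intro t ht
  have hM : 0 ≤ M := by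
    have := hR 0
    simp at this
    exact le_trans (norm_nonneg _) this
  have hterm : ∀ k : ℕ, ‖(k.factorial : ℝ)⁻¹ • ((t * l ^ 2) • R) ^ k‖
      ≤ M * ((t * l) ^ k / k.factorial) := by
    intro k
    rw [smul_pow]
    calc ‖(k.factorial : ℝ)⁻¹ • (t * l ^ 2) ^ k • R ^ k‖
        ≤ ‖((k.factorial : ℝ))⁻¹‖ * ‖(t * l ^ 2) ^ k • R ^ k‖ := ContinuousLinearMap.opNorm_smul_le _ _
      _ ≤ ‖((k.factorial : ℝ))⁻¹‖ * (‖(t * l ^ 2) ^ k‖ * ‖R ^ k‖) := by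
          apply mul_le_mul_of_nonneg_left (ContinuousLinearMap.opNorm_smul_le _ _) (norm_nonneg _)
      _ = (k.factorial : ℝ)⁻¹ * ((t * l ^ 2) ^ k * ‖R ^ k‖) := by
          rw [Real.norm_eq_abs, Real.norm_eq_abs, abs_of_nonneg (by positivity),
            abs_of_nonneg (by positivity)]
      _ ≤ (k.factorial : ℝ)⁻¹ * ((t * l ^ 2) ^ k * (M / l ^ k)) := by
          apply mul_le_mul_of_nonneg_left _ (by positivity)
          exact mul_le_mul_of_nonneg_left (hR k) (by positivity)
      _ = M * ((t * l) ^ k / k.factorial) := by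
          have h0 : (l : ℝ) ^ k ≠ 0 := by positivity
          have h1 : (k.factorial : ℝ) ≠ 0 := Nat.cast_ne_zero.mpr k.factorial_ne_zero
          field_simp
          ring
  have hsum1 : Summable fun k : ℕ => (k.factorial : ℝ)⁻¹ • ((t * l ^ 2) • R) ^ k :=
    NormedSpace.expSeries_summable' (𝕂 := ℝ) ((t * l ^ 2) • R)
  have hsumn : Summable fun k : ℕ => ‖(k.factorial : ℝ)⁻¹ • ((t * l ^ 2) • R) ^ k‖ :=
    NormedSpace.norm_expSeries_summable' (𝕂 := ℝ) ((t * l ^ 2) • R)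
  have hsum2 : Summable fun k : ℕ => M * ((t * l) ^ k / k.factorial) :=
    (Real.summable_pow_div_factorial (t * l)).mul_left M
  have hnorm : ‖NormedSpace.exp ((t * l ^ 2) • R)‖ ≤ M * Real.exp (t * l) := by
    rw [NormedSpace.exp_eq_tsum (𝕂 := ℝ)]
    calc ‖∑' k : ℕ, (k.factorial : ℝ)⁻¹ • ((t * l ^ 2) • R) ^ k‖
        ≤ ∑' k : ℕ, ‖(k.factorial : ℝ)⁻¹ • ((t * l ^ 2) • R) ^ k‖ :=
          norm_tsum_le_tsum_norm hsumn
      _ ≤ ∑' k : ℕ, M * ((t * l) ^ k / k.factorial) :=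
          Summable.tsum_le_tsum hterm hsumn hsum2
      _ = M * ∑' k : ℕ, ((t * l) ^ k / k.factorial) := tsum_mul_left
      _ = M * Real.exp (t * l) := by
          rw [Real.exp_eq_exp_ℝ, NormedSpace.exp_eq_tsum_div]
  calc ‖Real.exp (-(l * t)) • NormedSpace.exp ((t * l ^ 2) • R)‖
      ≤ ‖Real.exp (-(l * t))‖ * ‖NormedSpace.exp ((t * l ^ 2) • R)‖ := ContinuousLinearMap.opNorm_smul_le _ _
    _ = Real.exp (-(l * t)) * ‖NormedSpace.exp ((t * l ^ 2) • R)‖ := by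
        rw [Real.norm_eq_abs, abs_of_nonneg (Real.exp_nonneg _)]
    _ ≤ Real.exp (-(l * t)) * (M * Real.exp (t * l)) :=
        mul_le_mul_of_nonneg_left hnorm (Real.exp_nonneg _)
    _ = M := by
        rw [mul_comm M, ← mul_assoc, ← Real.exp_add]
        simp [mul_comm]
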